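/- For every positive integer k and every ≤_lex-increasing tuple x = (x_0, ..., x_{l_k - 1}) of elements of A_b, where l_k = b^k - 1, there exists f ∈ C↑_sur(b^ω) such that max f⁻¹(W_{s^k_i}) = x_i for all i < l_k, where (s^k_i)_{i=0}^{l_k} is the lexicographically increasing enumeration of b^k. -/

import Mathlib

noncomputable section
open Classical

/-- Lexicographic strict order on `ℕ → Fin b`. -/
def lexLT (b : ℕ) (x y : ℕ → Fin b) : Prop :=
  ∃ n, (∀ m, m < n → x m = y m) ∧ x n < y n

/-- Lexicographic order `≤_lex` on `ℕ → Fin b`. -/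
def lexLE (b : ℕ) (x y : ℕ → Fin b) : Prop := x = y ∨ lexLT b x y

def IsGreatestLex (b : ℕ) (S : Set (ℕ → Fin b)) (x : ℕ → Fin b) : Prop :=
  x ∈ S ∧ ∀ y ∈ S, lexLE b y x

def IsLeastLex (b : ℕ) (S : Set (ℕ → Fin b)) (x : ℕ → Fin b) : Prop :=
  x ∈ S ∧ ∀ y ∈ S, lexLE b x y

/-- `S` is an interval for the lexicographic order. -/
def LexInterval (b : ℕ) (S : Set (ℕ → Fin b)) : Prop :=
  ∀ x ∈ S, ∀ y ∈ S, ∀ z, lexLE b x z → lexLE b z y → z ∈ S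

/-- The basic clopen set of sequences extending the finite sequence `s`. -/
def W (b : ℕ) (s : List (Fin b)) : Set (ℕ → Fin b) :=
  {x | ∀ i, (hi : i < s.length) → x i = s.get ⟨i, hi⟩}

/-- Continuous nondecreasing surjections of `b^ω`, i.e. members of `C↑_sur(b^ω)`. -/
def CSur (b : ℕ) (f : (ℕ → Fin b) → (ℕ → Fin b)) : Prop :=
  Continuous f ∧ Function.Surjective f ∧ ∀ x y, lexLE b x y → lexLE b (f x) (f y)

/-- A filtering on `b^ω`. -/
def Filtering (b : ℕ) (U : List (Fin b) → Set (ℕ → Fin b)) : Prop :=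
  (∀ s, (U s).Nonempty ∧ IsClopen (U s) ∧ LexInterval b (U s)) ∧
  U [] = Set.univ ∧
  (∀ s, U s = ⋃ i : Fin b, U (s ++ [i])) ∧
  (∀ s, ∀ i j : Fin b, i ≠ j → Disjoint (U (s ++ [i])) (U (s ++ [j]))) ∧
  (∀ s, ∀ i j : Fin b, i < j → ∀ x y,
    IsGreatestLex b (U (s ++ [i])) x → IsGreatestLex b (U (s ++ [j])) y → lexLT b x y)

/-- `A_b`: sequences eventually equal to `b-1` (the top of `Fin b`), except the constant
top sequence (the lexicographic maximum of `b^ω`). -/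
def AbSet (b : ℕ) : Set (ℕ → Fin b) :=
  {x | (∃ N, ∀ n, N ≤ n → ∀ j : Fin b, j ≤ x n) ∧ ¬ ∀ n, ∀ j : Fin b, j ≤ x n}

/-- `Y` is order isomorphic to `ℚ` with respect to the lexicographic order. -/
def OrderIsoQ (b : ℕ) (Y : Set (ℕ → Fin b)) : Prop :=
  ∃ e : ℚ ≃ Y, ∀ p q : ℚ, p ≤ q ↔ lexLE b (e p).1 (e q).1

/-- `Y_f = {max f⁻¹(W_s) : s ∈ b^{<ω}} \ {max b^ω}`. -/
def Yset (b : ℕ) (f : (ℕ → Fin b) → (ℕ → Fin b)) : Set (ℕ → Fin b) :=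
  {x | (∃ s : List (Fin b), IsGreatestLex b (f ⁻¹' W b s) x) ∧ ¬ ∀ n, ∀ j : Fin b, j ≤ x n}

/-- The metric `ρ_b` on `b^ω`. -/
def rhoB (b : ℕ) (x y : ℕ → Fin b) : ℝ :=
  if h : x = y then 0 else (2 : ℝ) ^ (-(Nat.find (Function.ne_iff.mp h) : ℤ))

/-- The sup-metric `ρ_∞` on `C↑_sur(b^ω)`. -/
def rhoInf (b : ℕ) (f g : (ℕ → Fin b) → (ℕ → Fin b)) : ℝ :=
  ⨆ x, rhoB b (f x) (g x)

/-- `⌊log₂(1/ε)⌋ + 1`. -/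
def kOf (ε : ℝ) : ℕ := ⌊Real.logb 2 (1 / ε)⌋₊ + 1

/-- The `l`-th odd tangent number `t_l = tan^{(2l-1)}(0)`. -/
def oddTangent (l : ℕ) : ℝ := iteratedDeriv (2 * l - 1) Real.tan 0

/-- The lexicographically increasing enumeration of `b^k`: `sEnum b k hb i` is the
`i`-th element of `b^k` in lexicographic order (base-`b` digits, most significant first). -/
def sEnum (b k : ℕ) (hb : 0 < b) (i : ℕ) : List (Fin b) :=
  List.ofFn fun j : Fin k => (⟨i / b ^ (k - 1 - (j : ℕ)) % b, Nat.mod_lt _ hb⟩ : Fin b)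

end



section OrderAPI
variable {b : ℕ}

lemma lexLT_iff (x y : ℕ → Fin b) : lexLT b x y ↔ toLex x < toLex y := Iff.rfl

lemma lexLE_iff (x y : ℕ → Fin b) : lexLE b x y ↔ toLex x ≤ toLex y := by
  rw [le_iff_lt_or_eq, lexLE]
  constructor
  · rintro (h | h)
    · exact Or.inr (congrArg toLex h)
    · exact Or.inl h
  · rintro (h | h)
    · exact Or.inr h
    · exact Or.inl (toLex.injective h)

lemma lexLE_refl (x : ℕ → Fin b) : lexLE b x x := Or.inl rfl

lemma lexLE_trans {x y z : ℕ → Fin b} (h1 : lexLE b x y) (h2 : lexLE b y z) :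
    lexLE b x z := by
  rw [lexLE_iff] at *; exact le_trans h1 h2

lemma lexLE_of_lt {x y : ℕ → Fin b} (h : lexLT b x y) : lexLE b x y := Or.inr h

lemma not_lexLE {x y : ℕ → Fin b} : ¬ lexLE b x y ↔ lexLT b y x := by
  rw [lexLE_iff, lexLT_iff, not_le]; exact Iff.rfl

lemma lexLT_irrefl {x y : ℕ → Fin b} (h1 : lexLT b x y) (h2 : lexLE b y x) : False := by
  rw [lexLT_iff] at h1; rw [lexLE_iff] at h2; exact absurd h2 (not_le.mpr h1)

lemma lexLT_of_lt_of_le {x y z : ℕ → Fin b} (h1 : lexLT b x y) (h2 : lexLE b y z) :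
    lexLT b x z := by
  rw [lexLT_iff] at *; rw [lexLE_iff] at h2; exact lt_of_lt_of_le h1 h2

lemma lexLT_of_le_of_lt {x y z : ℕ → Fin b} (h1 : lexLE b x y) (h2 : lexLT b y z) :
    lexLT b x z := by
  rw [lexLT_iff] at *; rw [lexLE_iff] at h1; exact lt_of_le_of_lt h1 h2

lemma lexLE_of_forall_le {x y : ℕ → Fin b} (h : ∀ n, x n ≤ y n) : lexLE b x y := by
  by_cases hxy : x = y
  · exact Or.inl hxy
  · refine Or.inr ?_
    have hne : ∃ n, x n ≠ y n := Function.ne_iff.mp hxy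
    refine ⟨Nat.find hne, fun m hm => ?_, ?_⟩
    · have := Nat.find_min hne hm; simpa using this
    · exact lt_of_le_of_ne (h _) (Nat.find_spec hne)
end OrderAPI

section Digits
lemma digit_mod (b k e i : ℕ) (hb : 0 < b) (he : e < k) :
    i / b ^ e % b = (i % b ^ k) / b ^ e % b := by
  have hd : i = i % b ^ k + (b ^ (k - e - 1) * (i / b ^ k) * b) * b ^ e := by
    have h1 : b ^ (k - e - 1) * b * b ^ e = b ^ k := by
      rw [← pow_succ, ← pow_add]; congr 1; omega
    have h2 : b ^ (k - e - 1) * (i / b ^ k) * b * b ^ e = b ^ k * (i / b ^ k) := by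
      calc b ^ (k - e - 1) * (i / b ^ k) * b * b ^ e
          = b ^ (k - e - 1) * b * b ^ e * (i / b ^ k) := by ring
        _ = b ^ k * (i / b ^ k) := by rw [h1]
    have h3 := Nat.div_add_mod i (b ^ k)
    omega
  conv_lhs => rw [hd]
  rw [Nat.add_mul_div_right _ _ (pow_pos hb e), Nat.add_mul_mod_self_right]

lemma digit_lex (b : ℕ) (hb : 0 < b) :
    ∀ k i j, i < j → j < b ^ k →
    ∃ m < k, (∀ p, p < m → i / b ^ (k - 1 - p) % b = j / b ^ (k - 1 - p) % b) ∧
      i / b ^ (k - 1 - m) % b < j / b ^ (k - 1 - m) % b := by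
  intro k
  induction k with
  | zero => intro i j hij hj; simp at hj; omega
  | succ k ih =>
    intro i j hij hj
    have hdle : i / b ^ k ≤ j / b ^ k := Nat.div_le_div_right hij.le
    have hjd : j / b ^ k < b := (Nat.div_lt_iff_lt_mul (pow_pos hb k)).mpr
      (by rw [mul_comm, ← pow_succ]; exact hj)
    have hid : i / b ^ k < b := lt_of_le_of_lt hdle hjd
    rcases eq_or_lt_of_le hdle with h | h
    · -- equal leading digit
      have hri : i % b ^ k < j % b ^ k := by
        have h1 := Nat.div_add_mod i (b ^ k)
        have h2 := Nat.div_add_mod j (b ^ k)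
        rw [h] at h1
        omega
      obtain ⟨m, hm, hpre, hlt⟩ := ih (i % b ^ k) (j % b ^ k) hri
        (Nat.mod_lt _ (pow_pos hb k))
      refine ⟨m + 1, by omega, ?_, ?_⟩
      · intro p hp
        rcases Nat.eq_zero_or_pos p with rfl | hp0
        · have he : k + 1 - 1 - 0 = k := by omega
          rw [he, h]
        · obtain ⟨q, rfl⟩ := Nat.exists_eq_add_of_le hp0
          have he : k + 1 - 1 - (1 + q) = k - 1 - q := by omega
          have heq : k - 1 - q < k := by omega
          rw [he, digit_mod b k (k-1-q) i hb heq, digit_mod b k (k-1-q) j hb heq]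
          exact hpre q (by omega)
      · have he : k + 1 - 1 - (m + 1) = k - 1 - m := by omega
        rw [he, digit_mod b k (k-1-m) i hb (by omega), digit_mod b k (k-1-m) j hb (by omega)]
        exact hlt
    · refine ⟨0, by omega, by omega, ?_⟩
      have he : k + 1 - 1 - 0 = k := by omega
      rw [he, Nat.mod_eq_of_lt hid, Nat.mod_eq_of_lt hjd]
      exact h
end Digits

section SE
variable {b k : ℕ} (hb : 0 < b)

lemma sEnum_length (i : ℕ) : (sEnum b k hb i).length = k := by simp [sEnum]

lemma sEnum_get (i n : ℕ) (h : n < (sEnum b k hb i).length) :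
    (sEnum b k hb i).get ⟨n, h⟩ = ⟨i / b ^ (k - 1 - n) % b, Nat.mod_lt _ hb⟩ := by
  simp [sEnum]

lemma sEnum_inj {i j : ℕ} (hi : i < b ^ k) (hj : j < b ^ k)
    (h : sEnum b k hb i = sEnum b k hb j) : i = j := by
  unfold sEnum at h
  rw [List.ofFn_inj] at h
  by_contra hne
  rcases Nat.lt_or_ge i j with hlt | hge
  · obtain ⟨m, hm, -, hltd⟩ := digit_lex b hb k i j hlt hj
    have := congrFun h ⟨m, hm⟩
    simp only [Fin.mk.injEq] at this
    omega
  · have hlt : j < i := by omega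
    obtain ⟨m, hm, -, hltd⟩ := digit_lex b hb k j i hlt hi
    have := congrFun h ⟨m, hm⟩
    simp only [Fin.mk.injEq] at this
    omega

lemma sEnum_surj (w : Fin k → Fin b) :
    ∃ j < b ^ k, ∀ n (h : n < k),
      (sEnum b k hb j).get ⟨n, by rw [sEnum_length]; exact h⟩ = w ⟨n, h⟩ := by
  classical
  set g : Fin (b ^ k) → (Fin k → Fin b) := fun i m =>
    ⟨(i : ℕ) / b ^ (k - 1 - (m : ℕ)) % b, Nat.mod_lt _ hb⟩ with hg
  have hginj : Function.Injective g := by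
    intro i j hij
    ext
    by_contra hne
    have key : ∀ i' j' : Fin (b ^ k), (i' : ℕ) < (j' : ℕ) → g i' = g j' → False := by
      intro i' j' hlt heq
      obtain ⟨m, hm, -, hltd⟩ := digit_lex b hb k i' j' hlt j'.2
      have := congrFun heq ⟨m, hm⟩
      simp only [hg, Fin.mk.injEq] at this
      omega
    rcases Nat.lt_or_ge (i : ℕ) (j : ℕ) with h' | h'
    · exact key i j h' hij
    · exact key j i (by omega) hij.symm
  have hcard : Fintype.card (Fin k → Fin b) = Fintype.card (Fin (b ^ k)) := by
    simp [Fintype.card_fun]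
  have hgbij : Function.Bijective g :=
    (Fintype.bijective_iff_injective_and_card g).mpr ⟨hginj, hcard.symm⟩
  obtain ⟨j, hjw⟩ := hgbij.2 w
  refine ⟨j, j.2, fun n h => ?_⟩
  rw [sEnum_get]
  have := congrFun hjw ⟨n, h⟩
  simpa [hg] using this
end SE

noncomputable section FFdef
open Classical

def Tb (b : ℕ) (hb : 0 < b) : Fin b := ⟨b - 1, by omega⟩

def Mfun (b l : ℕ) (hb : 0 < b) (x : Fin l → ℕ → Fin b) (c : ℕ) : ℕ → Fin b :=
  fun n => if h : c < l then x ⟨c, h⟩ n else Tb b hb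

def Cfun (b l : ℕ) (x : Fin l → ℕ → Fin b) (y : ℕ → Fin b) : ℕ :=
  Nat.find (show ∃ n, l ≤ n ∨ ∃ h : n < l, lexLE b y (x ⟨n, h⟩) from ⟨l, Or.inl le_rfl⟩)

def Ffun (b l N k : ℕ) (hb : 0 < b) (x : Fin l → ℕ → Fin b) (y : ℕ → Fin b) : ℕ → Fin b :=
  fun n =>
    if h : n < k then (sEnum b k hb (Cfun b l x y)).get ⟨n, by rw [sEnum_length]; exact h⟩
    else if ∀ m, m < N → y m = Mfun b l hb x (Cfun b l x y) m then y (n - k + N)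
    else ⟨0, hb⟩

end FFdef

section FFlem
open Classical
variable {b l N k : ℕ} (hb : 0 < b) (x : Fin l → ℕ → Fin b)

lemma Tb_le (v : Fin b) : v ≤ Tb b hb := by
  have := v.2
  rw [Fin.le_def]
  simp only [Tb]
  omega

lemma Cfun_le (y : ℕ → Fin b) : Cfun b l x y ≤ l :=
  Nat.find_le (Or.inl le_rfl)

lemma Cfun_spec (y : ℕ → Fin b) (h : Cfun b l x y < l) :
    lexLE b y (x ⟨Cfun b l x y, h⟩) := by
  have hs : l ≤ Cfun b l x y ∨ ∃ h' : Cfun b l x y < l, lexLE b y (x ⟨Cfun b l x y, h'⟩) :=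
    Nat.find_spec (show ∃ n, l ≤ n ∨ ∃ h : n < l, lexLE b y (x ⟨n, h⟩) from ⟨l, Or.inl le_rfl⟩)
  rcases hs with h' | ⟨h1, h2⟩
  · omega
  · exact h2

lemma Cfun_min (y : ℕ → Fin b) (m : ℕ) (hm : m < Cfun b l x y) :
    lexLT b (x ⟨m, lt_of_lt_of_le hm (Cfun_le x y)⟩) y := by
  have h := Nat.find_min (show ∃ n, l ≤ n ∨ ∃ h : n < l, lexLE b y (x ⟨n, h⟩)
    from ⟨l, Or.inl le_rfl⟩) hm
  push_neg at h
  exact not_lexLE.mp (h.2 (lt_of_lt_of_le hm (Cfun_le x y)))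

lemma Cfun_mono {y z : ℕ → Fin b} (h : lexLE b y z) :
    Cfun b l x y ≤ Cfun b l x z := by
  by_contra hc
  push_neg at hc
  have h1 : Cfun b l x z < l := lt_of_lt_of_le hc (Cfun_le x y)
  have h2 := Cfun_spec x z h1
  have h3 := Cfun_min x y (Cfun b l x z) hc
  exact lexLT_irrefl h3 (lexLE_trans h (lexLE_trans h2 (lexLE_refl _)))

/-- first difference of a comparable pair is in the right direction -/
lemma first_diff_lt {y z : ℕ → Fin b} (h : lexLT b y z) (n : ℕ)
    (hag : ∀ m, m < n → y m = z m) (hne : y n ≠ z n) : y n < z n := by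
  obtain ⟨n₂, hag₂, hlt₂⟩ := h
  rcases lt_trichotomy n n₂ with h' | rfl | h'
  · exact absurd (hag₂ n h') hne
  · exact hlt₂
  · exact absurd (hag n₂ h') (ne_of_lt hlt₂)

/-- squeeze: if `y ≤ z ≤ w` and `y` agrees with `w` below `N`, so does `z`. -/
lemma squeeze_agree {y z w : ℕ → Fin b} (h1 : lexLE b y z) (h2 : lexLE b z w)
    (hag : ∀ n, n < N → y n = w n) : ∀ n, n < N → z n = w n := by
  by_cases hzw : z = w
  · intro n _; rw [hzw]
  · have hne : ∃ n, z n ≠ w n := Function.ne_iff.mp hzw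
    set n₁ := Nat.find hne with hn₁
    have hagb : ∀ m, m < n₁ → z m = w m := fun m hm => by
      have := Nat.find_min hne hm; simpa using this
    have hlt : z n₁ < w n₁ := by
      rcases h2 with h2 | h2
      · exact absurd h2 hzw
      · exact first_diff_lt h2 n₁ hagb (Nat.find_spec hne)
    -- show n₁ ≥ N
    rcases Nat.lt_or_ge n₁ N with hN' | hN'
    · exfalso
      -- then z <lex y, contradicting y ≤ z
      have : lexLT b z y := ⟨n₁, fun m hm => by
        rw [hagb m hm, ← hag m (by omega)], by rw [hag n₁ hN']; exact hlt⟩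
      exact lexLT_irrefl this h1
    · intro n hn
      exact hagb n (by omega)

lemma lexLE_congr_of_agree
    (HN1 : ∀ (i : Fin l) n, N ≤ n → x i n = Tb b hb)
    {y z : ℕ → Fin b} (hag : ∀ n, n < N → y n = z n) (i : Fin l)
    (h : lexLE b y (x i)) : lexLE b z (x i) := by
  by_contra h'
  rw [not_lexLE] at h'
  obtain ⟨n, hagn, hlt⟩ := h'
  have hnN : n < N := by
    by_contra hge
    rw [HN1 i n (by omega)] at hlt
    exact absurd (Tb_le hb (z n)) (not_le.mpr hlt)
  have : lexLT b (x i) y := ⟨n, fun m hm => by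
    rw [hagn m hm, ← hag m (by omega)], by rw [hag n hnN]; exact hlt⟩
  exact lexLT_irrefl this h

lemma Cfun_congr (HN1 : ∀ (i : Fin l) n, N ≤ n → x i n = Tb b hb)
    {y z : ℕ → Fin b} (hag : ∀ n, n < N → y n = z n) :
    Cfun b l x y = Cfun b l x z := by
  have key : ∀ y' z' : ℕ → Fin b, (∀ n, n < N → y' n = z' n) →
      Cfun b l x y' ≤ Cfun b l x z' := by
    intro y' z' hag'
    apply Nat.find_le
    rcases Nat.lt_or_ge (Cfun b l x z') l with h | h
    · exact Or.inr ⟨h, lexLE_congr_of_agree hb x HN1 (fun n hn => (hag' n hn).symm) _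
        (Cfun_spec x z' h)⟩
    · exact Or.inl h
  exact le_antisymm (key y z hag) (key z y (fun n hn => (hag n hn).symm))

lemma Cfun_x (Hmono : ∀ i j : Fin l, i < j → lexLT b (x i) (x j)) (j : Fin l) :
    Cfun b l x (x j) = (j : ℕ) := by
  apply le_antisymm
  · exact Nat.find_le (Or.inr ⟨j.2, lexLE_refl _⟩)
  · by_contra hc
    push_neg at hc
    have hCl : Cfun b l x (x j) < l := lt_trans hc j.2
    have h1 := Cfun_spec x (x j) hCl
    have h2 := Hmono ⟨Cfun b l x (x j), hCl⟩ j (by simpa [Fin.lt_def] using hc)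
    exact lexLT_irrefl h2 h1

lemma Cfun_top (HN2 : ∀ i : Fin l, ∃ n, n < N ∧ x i n ≠ Tb b hb)
    {y : ℕ → Fin b} (hy : ∀ n, n < N → y n = Tb b hb) :
    Cfun b l x y = l := by
  apply le_antisymm (Cfun_le x y)
  by_contra hc
  push_neg at hc
  have h1 := Cfun_spec x y hc
  set i : Fin l := ⟨Cfun b l x y, hc⟩
  obtain ⟨nw, hnwN, hnw⟩ := HN2 i
  have hne : ∃ n, x i n ≠ Tb b hb := ⟨nw, hnw⟩
  set n₀ := Nat.find hne with hn₀
  have hn₀N : n₀ < N := lt_of_le_of_lt (Nat.find_min' hne hnw) hnwN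
  have hlt : lexLT b (x i) y := by
    refine ⟨n₀, fun m hm => ?_, ?_⟩
    · have h2 := Nat.find_min hne hm
      simp only [not_not] at h2
      rw [h2, hy m (by omega)]
    · rw [hy n₀ hn₀N]
      exact lt_of_le_of_ne (Tb_le hb _) (Nat.find_spec hne)
  exact lexLT_irrefl hlt h1

lemma Cfun_agree_x (HN1 : ∀ (i : Fin l) n, N ≤ n → x i n = Tb b hb)
    (Hmono : ∀ i j : Fin l, i < j → lexLT b (x i) (x j))
    {y : ℕ → Fin b} (j : Fin l) (hag : ∀ n, n < N → y n = x j n) :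
    Cfun b l x y = (j : ℕ) := by
  rw [Cfun_congr hb x HN1 hag, Cfun_x x Hmono]
end FFlem
section FFmain
open Classical
variable {b l N k : ℕ} (hb : 0 < b) (x : Fin l → ℕ → Fin b)

lemma Ffun_apply_lt (y : ℕ → Fin b) {n : ℕ} (hn : n < k) :
    Ffun b l N k hb x y n =
      (sEnum b k hb (Cfun b l x y)).get ⟨n, by rw [sEnum_length]; exact hn⟩ :=
  dif_pos hn

lemma Ffun_apply_ge (y : ℕ → Fin b) {n : ℕ} (hn : k ≤ n)
    (hQ : ∀ m, m < N → y m = Mfun b l hb x (Cfun b l x y) m) :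
    Ffun b l N k hb x y n = y (n - k + N) := by
  rw [Ffun, dif_neg (not_lt.mpr hn), if_pos hQ]

lemma Ffun_apply_ge' (y : ℕ → Fin b) {n : ℕ} (hn : k ≤ n)
    (hQ : ¬ ∀ m, m < N → y m = Mfun b l hb x (Cfun b l x y) m) :
    Ffun b l N k hb x y n = ⟨0, hb⟩ := by
  rw [Ffun, dif_neg (not_lt.mpr hn), if_neg hQ]

lemma Ffun_mem_W (Hl : l < b ^ k) (y : ℕ → Fin b) {j : ℕ} (hj : j < b ^ k) :
    Ffun b l N k hb x y ∈ W b (sEnum b k hb j) ↔ Cfun b l x y = j := by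
  constructor
  · intro h
    apply sEnum_inj hb (lt_of_le_of_lt (Cfun_le x y) Hl) hj
    apply List.ext_get (by rw [sEnum_length, sEnum_length])
    intro n h1 h2
    have hnk : n < k := by rwa [sEnum_length] at h1
    have := h n (by rwa [sEnum_length])
    rw [Ffun_apply_lt hb x y hnk] at this
    exact this
  · intro h
    intro i hi
    have hik : i < k := by rwa [sEnum_length] at hi
    rw [Ffun_apply_lt hb x y hik, h]

lemma Ffun_mono (Hl : l < b ^ k)
    (HN1 : ∀ (i : Fin l) n, N ≤ n → x i n = Tb b hb)
    {y z : ℕ → Fin b} (h : lexLE b y z) :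
    lexLE b (Ffun b l N k hb x y) (Ffun b l N k hb x z) := by
  have hcyz := Cfun_mono x h
  rcases eq_or_lt_of_le hcyz with hc | hc
  · -- same interval
    by_cases hQ : ∀ m, m < N → y m = Mfun b l hb x (Cfun b l x y) m
    · -- y satisfies the prefix condition; so does z
      have hQz : ∀ m, m < N → z m = Mfun b l hb x (Cfun b l x z) m := by
        rcases Nat.lt_or_ge (Cfun b l x z) l with hcl | hcl
        · have hzx : lexLE b z (x ⟨Cfun b l x z, hcl⟩) := Cfun_spec x z hcl
          have hMx : ∀ m, Mfun b l hb x (Cfun b l x z) m = x ⟨Cfun b l x z, hcl⟩ m :=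
            fun m => dif_pos hcl
          intro m hm
          rw [hMx]
          exact squeeze_agree h hzx
            (fun n hn => by rw [hQ n hn, hc, hMx]) m hm
        · have hMT : ∀ c m, l ≤ c → Mfun b l hb x c m = Tb b hb :=
            fun c m hcm => dif_neg (by omega)
          have hagyz : ∀ m, m < N → z m = y m := by
            by_cases hyz : y = z
            · intro m _; rw [hyz]
            · have hne : ∃ n, y n ≠ z n := Function.ne_iff.mp hyz
              have hagb : ∀ m', m' < Nat.find hne → y m' = z m' := fun m' hm' => by
                have := Nat.find_min hne hm'; simpa using this
              have hlt1 : y (Nat.find hne) < z (Nat.find hne) := by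
                rcases h with h | h
                · exact absurd h hyz
                · exact first_diff_lt h _ hagb (Nat.find_spec hne)
              have hn₁N : N ≤ Nat.find hne := by
                by_contra hlt2
                push_neg at hlt2
                rw [hQ _ hlt2, hMT _ _ (by omega)] at hlt1
                exact absurd (Tb_le hb (z (Nat.find hne))) (not_le.mpr hlt1)
              intro m hm
              exact (hagb m (by omega)).symm
          intro m hm
          rw [hagyz m hm, hQ m hm, hMT _ _ (by omega), hMT _ _ hcl]
      -- now both prefix conditions hold
      by_cases hyz : y = z
      · subst hyz; exact lexLE_refl _
      · have hne : ∃ n, y n ≠ z n := Function.ne_iff.mp hyz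
        have hagb : ∀ m', m' < Nat.find hne → y m' = z m' := fun m' hm' => by
          have := Nat.find_min hne hm'; simpa using this
        have hlt1 : y (Nat.find hne) < z (Nat.find hne) := by
          rcases h with h | h
          · exact absurd h hyz
          · exact first_diff_lt h _ hagb (Nat.find_spec hne)
        have hn₁N : N ≤ Nat.find hne := by
          by_contra hlt2
          push_neg at hlt2
          exact Nat.find_spec hne (by rw [hQ _ hlt2, hc, ← hQz _ hlt2])
        refine Or.inr ⟨Nat.find hne - N + k, fun p hp => ?_, ?_⟩
        · by_cases hpk : p < k
          · rw [Ffun_apply_lt hb x y hpk, Ffun_apply_lt hb x z hpk, hc]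
          · push_neg at hpk
            rw [Ffun_apply_ge hb x y hpk hQ, Ffun_apply_ge hb x z hpk hQz]
            exact hagb _ (by omega)
        · rw [Ffun_apply_ge hb x y (by omega) hQ, Ffun_apply_ge hb x z (by omega) hQz]
          have harith : Nat.find hne - N + k - k + N = Nat.find hne := by omega
          rw [harith]
          exact hlt1
    · -- y fails the prefix condition: tail of F y is constantly 0
      apply lexLE_of_forall_le
      intro n
      by_cases hnk : n < k
      · rw [Ffun_apply_lt hb x y hnk, Ffun_apply_lt hb x z hnk, hc]
      · push_neg at hnk
        rw [Ffun_apply_ge' hb x y hnk hQ]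
        exact Fin.mk_le_of_le_val (Nat.zero_le _)
  · -- different intervals: leading digits already differ
    obtain ⟨m, hm, hpre, hltd⟩ :=
      digit_lex b hb k _ _ hc (lt_of_le_of_lt (Cfun_le x z) Hl)
    refine Or.inr ⟨m, fun p hp => ?_, ?_⟩
    · have hpk : p < k := lt_trans hp hm
      rw [Ffun_apply_lt hb x y hpk, Ffun_apply_lt hb x z hpk, sEnum_get, sEnum_get]
      exact Fin.ext (hpre p hp)
    · rw [Ffun_apply_lt hb x y hm, Ffun_apply_lt hb x z hm, sEnum_get, sEnum_get]
      exact Fin.mk_lt_mk.mpr hltd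

lemma Ffun_surj (Hleq : l + 1 = b ^ k)
    (HN1 : ∀ (i : Fin l) n, N ≤ n → x i n = Tb b hb)
    (HN2 : ∀ i : Fin l, ∃ n, n < N ∧ x i n ≠ Tb b hb)
    (Hmono : ∀ i j : Fin l, i < j → lexLT b (x i) (x j)) :
    Function.Surjective (Ffun b l N k hb x) := by
  intro z
  obtain ⟨j, hj, hjd⟩ := sEnum_surj hb (fun m : Fin k => z (m : ℕ))
  set y : ℕ → Fin b := fun n => if n < N then Mfun b l hb x j n else z (n - N + k) with hy
  have hCy : Cfun b l x y = j := by
    rcases Nat.lt_or_ge j l with hjl | hjl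
    · exact Cfun_agree_x hb x HN1 Hmono ⟨j, hjl⟩
        (fun n hn => by simp only [hy, if_pos hn, Mfun, dif_pos hjl])
    · have hjl' : j = l := by omega
      subst hjl'
      exact Cfun_top hb x HN2
        (fun n hn => by simp only [hy, if_pos hn, Mfun, dif_neg (lt_irrefl _)])
  have hQ : ∀ m, m < N → y m = Mfun b l hb x (Cfun b l x y) m := fun m hm => by
    rw [hCy]; simp only [hy, if_pos hm]
  refine ⟨y, funext fun n => ?_⟩
  by_cases hn : n < k
  · rw [Ffun_apply_lt hb x y hn, hCy]
    exact hjd n hn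
  · push_neg at hn
    rw [Ffun_apply_ge hb x y hn hQ]
    simp only [hy]
    rw [if_neg (show ¬ (n - k + N < N) by omega)]
    congr 1
    omega

lemma Ffun_cont (HN1 : ∀ (i : Fin l) n, N ≤ n → x i n = Tb b hb) :
    Continuous (Ffun b l N k hb x) := by
  rw [continuous_iff_continuousAt]
  intro y
  set U : Set (ℕ → Fin b) := ⋂ n : Fin N, (fun z : ℕ → Fin b => z (n : ℕ)) ⁻¹' {y (n : ℕ)}
    with hU
  have hUopen : IsOpen U := isOpen_iInter_of_finite fun n =>
    (continuous_apply (n : ℕ)).isOpen_preimage _ (isOpen_discrete _)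
  have hyU : y ∈ U := Set.mem_iInter.mpr fun n => rfl
  have hUmem : ∀ z ∈ U, ∀ n, n < N → z n = y n := by
    intro z hz n hn
    exact Set.mem_iInter.mp hz ⟨n, hn⟩
  have hCU : ∀ z ∈ U, Cfun b l x z = Cfun b l x y := fun z hz =>
    Cfun_congr hb x HN1 (hUmem z hz)
  by_cases hQ : ∀ m, m < N → y m = Mfun b l hb x (Cfun b l x y) m
  · set g : (ℕ → Fin b) → (ℕ → Fin b) := fun z n =>
      if h : n < k then (sEnum b k hb (Cfun b l x y)).get ⟨n, by rw [sEnum_length]; exact h⟩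
      else z (n - k + N) with hg
    have hgc : Continuous g := by
      apply continuous_pi
      intro n
      by_cases hn : n < k
      · simp only [hg, dif_pos hn]
        exact continuous_const
      · simp only [hg, dif_neg hn]
        exact continuous_apply _
    apply ContinuousAt.congr (hgc.continuousAt)
    apply Filter.eventuallyEq_of_mem (hUopen.mem_nhds hyU)
    intro z hz
    have hQz : ∀ m, m < N → z m = Mfun b l hb x (Cfun b l x z) m := fun m hm => by
      rw [hCU z hz, hUmem z hz m hm]
      exact hQ m hm
    funext n
    by_cases hn : n < k
    · rw [Ffun_apply_lt hb x z hn, hCU z hz]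
      simp only [hg, dif_pos hn]
    · push_neg at hn
      rw [Ffun_apply_ge hb x z hn hQz]
      simp only [hg, dif_neg (not_lt.mpr hn)]
  · set g0 : ℕ → Fin b := fun n =>
      if h : n < k then (sEnum b k hb (Cfun b l x y)).get ⟨n, by rw [sEnum_length]; exact h⟩
      else ⟨0, hb⟩ with hg0
    apply ContinuousAt.congr (continuousAt_const : ContinuousAt (fun _ => g0) y)
    apply Filter.eventuallyEq_of_mem (hUopen.mem_nhds hyU)
    intro z hz
    have hQz : ¬ ∀ m, m < N → z m = Mfun b l hb x (Cfun b l x z) m := by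
      intro hcon
      apply hQ
      intro m hm
      rw [← hUmem z hz m hm, hcon m hm, hCU z hz]
    funext n
    by_cases hn : n < k
    · rw [Ffun_apply_lt hb x z hn, hCU z hz]
      simp only [hg0, dif_pos hn]
    · push_neg at hn
      rw [Ffun_apply_ge' hb x z hn hQz]
      simp only [hg0, dif_neg (not_lt.mpr hn)]
end FFmain

/-- every `≤_lex`-increasing `(b^k - 1)`-tuple in `A_b` is realized as the
tuple of maxima `(max f⁻¹(W_{s^k_i}))_{i < b^k - 1}` for some `f ∈ C↑_sur(b^ω)`. -/
theorem finding_function (b : ℕ) (hb : 2 ≤ b) (k : ℕ) (hk : 1 ≤ k)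
    (x : Fin (b ^ k - 1) → (ℕ → Fin b))
    (hmem : ∀ i, x i ∈ AbSet b)
    (hmono : ∀ i j, i < j → lexLT b (x i) (x j)) :
    ∃ f, CSur b f ∧
      ∀ i : Fin (b ^ k - 1),
        IsGreatestLex b (f ⁻¹' W b (sEnum b k (by omega) (i : ℕ))) (x i) := by 
  classical
  have hb0 : 0 < b := by omega
  have hbk : 2 ≤ b ^ k := by
    calc 2 ≤ b := hb
    _ = b ^ 1 := (pow_one b).symm
    _ ≤ b ^ k := Nat.pow_le_pow_right (by omega) hk
  have Hl : b ^ k - 1 < b ^ k := by omega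
  have Hleq : (b ^ k - 1) + 1 = b ^ k := by omega
  have h1 : ∀ i : Fin (b ^ k - 1), ∃ M, ∀ n, M ≤ n → x i n = Tb b hb0 := by
    intro i
    obtain ⟨⟨M, hM⟩, -⟩ := hmem i
    exact ⟨M, fun n hn => le_antisymm (Tb_le hb0 _) (hM n hn _)⟩
  have h2 : ∀ i : Fin (b ^ k - 1), ∃ n, x i n ≠ Tb b hb0 := by
    intro i
    obtain ⟨-, h⟩ := hmem i
    push_neg at h
    obtain ⟨n, j, hj⟩ := h
    refine ⟨n, fun hc => ?_⟩
    rw [hc] at hj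
    exact absurd (Tb_le hb0 j) (not_le.mpr hj)
  choose Mf hMf using h1
  choose nf hnf using h2
  set N : ℕ := (Finset.univ.sup fun i : Fin (b ^ k - 1) => max (Mf i) (nf i + 1)) with hNdef
  have HN1 : ∀ (i : Fin (b ^ k - 1)) n, N ≤ n → x i n = Tb b hb0 := by
    intro i n hn
    apply hMf i
    have hle : max (Mf i) (nf i + 1) ≤ N :=
      Finset.le_sup (f := fun i : Fin (b ^ k - 1) => max (Mf i) (nf i + 1)) (Finset.mem_univ i)
    omega
  have HN2 : ∀ i : Fin (b ^ k - 1), ∃ n, n < N ∧ x i n ≠ Tb b hb0 := by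
    intro i
    refine ⟨nf i, ?_, hnf i⟩
    have hle : max (Mf i) (nf i + 1) ≤ N :=
      Finset.le_sup (f := fun i : Fin (b ^ k - 1) => max (Mf i) (nf i + 1)) (Finset.mem_univ i)
    omega
  refine ⟨Ffun b (b ^ k - 1) N k hb0 x,
    ⟨Ffun_cont hb0 x HN1, Ffun_surj hb0 x Hleq HN1 HN2 hmono,
      fun y z h => Ffun_mono hb0 x Hl HN1 h⟩, ?_⟩
  intro i
  constructor
  · exact (Ffun_mem_W hb0 x Hl (x i) (lt_trans i.2 Hl)).mpr (Cfun_x x hmono i)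
  · intro y hy
    have hy' : Cfun b (b ^ k - 1) x y = (i : ℕ) :=
      (Ffun_mem_W hb0 x Hl y (lt_trans i.2 Hl)).mp hy
    have hlt : Cfun b (b ^ k - 1) x y < b ^ k - 1 := by rw [hy']; exact i.2
    have hspec := Cfun_spec x y hlt
    rwa [show (⟨Cfun b (b ^ k - 1) x y, hlt⟩ : Fin (b ^ k - 1)) = i from Fin.ext hy'] at hspec
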